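/- Let Γ be a group with finite symmetric generating set S, let G = Cay(Γ,S), and let K ⊆ Γ be a finite nonempty set. Let r ≥ 1 be such that |B(o,r)| ≥ 2|K|, where B(o,r) is the ball of radius r around the identity. Then there exists a generator g ∈ S such that the number of x ∈ K with xg ∉ K is at least |K|/(2r). -/

import Mathlib

open scoped Classical

/-- The ball of radius `n` around the identity in the Cayley graph of a group
with generating set `S`. -/
def cayleyBall {Γ : Type u} [Group Γ] (S : Finset Γ) (n : ℕ) : Set Γ :=
  {x | ∃ l : List Γ, (∀ g ∈ l, g ∈ S) ∧ l.length ≤ n ∧ l.prod = x}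

open scoped Pointwise

noncomputable def ballFinset {Γ : Type*} [Group Γ] (S : Finset Γ) : ℕ → Finset Γ
  | 0 => {1}
  | n + 1 => ballFinset S n ∪ S * ballFinset S n

lemma coe_ballFinset {Γ : Type*} [Group Γ] (S : Finset Γ) (n : ℕ) :
    (↑(ballFinset S n) : Set Γ) = cayleyBall S n := by
  induction n with
  | zero =>
    ext x
    simp only [ballFinset, Finset.coe_singleton, Set.mem_singleton_iff, cayleyBall,
      Set.mem_setOf_eq]
    constructor
    · rintro rfl; exact ⟨[], by simp⟩
    · rintro ⟨l, _, hl, rfl⟩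
      have : l = [] := List.length_eq_zero_iff.mp (Nat.le_zero.mp hl)
      simp [this]
  | succ n ih =>
    ext x
    simp only [ballFinset, Finset.coe_union, Set.mem_union, cayleyBall, Set.mem_setOf_eq]
    constructor
    · rintro (hx | hx)
      · have hx' := ih ▸ (Finset.mem_coe.mpr hx)
        obtain ⟨l, h1, h2, h3⟩ := hx'
        exact ⟨l, h1, h2.trans (Nat.le_succ n), h3⟩
      · obtain ⟨s, hs, y, hy, rfl⟩ := Finset.mem_mul.mp hx
        have hy' := ih ▸ (Finset.mem_coe.mpr hy)
        obtain ⟨l, h1, h2, h3⟩ := hy'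
        refine ⟨s :: l, ?_, by simpa using h2, by simp [h3]⟩
        intro g hg
        rcases List.mem_cons.mp hg with rfl | hg
        · exact hs
        · exact h1 g hg
    · rintro ⟨l, h1, h2, rfl⟩
      match l with
      | [] =>
        left
        have h1' : (1 : Γ) ∈ cayleyBall S n := ⟨[], by simp⟩
        simpa using (ih ▸ h1' : (1:Γ) ∈ (↑(ballFinset S n) : Set Γ))
      | g :: t =>
        right
        have ht : t.prod ∈ (↑(ballFinset S n) : Set Γ) := by
          rw [ih]
          exact ⟨t, fun x hx => h1 x (List.mem_cons_of_mem _ hx), by simpa using h2, rfl⟩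
        rw [List.prod_cons]
        exact Finset.mem_mul.mpr ⟨g, h1 g List.mem_cons_self, t.prod, ht, rfl⟩

lemma telescope {Γ : Type*} [Group Γ] (K : Finset Γ) :
    ∀ l : List Γ, (K.filter (fun x => x * l.prod ∉ K)).card ≤
      (l.map (fun s => (K.filter (fun x => x * s ∉ K)).card)).sum := by
  intro l
  induction l with
  | nil =>
    simp only [List.prod_nil, mul_one, List.map_nil, List.sum_nil, Nat.le_zero,
      Finset.card_eq_zero, Finset.filter_eq_empty_iff]
    intro x hx
    exact not_not_intro hx
  | cons s t ih =>
    have hsub : K.filter (fun x => x * (s :: t).prod ∉ K) ⊆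
        K.filter (fun x => x * s ∉ K) ∪ K.filter (fun x => x * s ∈ K ∧ x * (s * t.prod) ∉ K) := by
      intro x hx
      simp only [Finset.mem_filter, List.prod_cons] at hx
      replace hx := Finset.mem_filter.mp hx
      by_cases h : x * s ∈ K
      · exact Finset.mem_union_right _ (Finset.mem_filter.mpr ⟨hx.1, h, hx.2⟩)
      · exact Finset.mem_union_left _ (Finset.mem_filter.mpr ⟨hx.1, h⟩)
    have h2 : (K.filter (fun x => x * s ∈ K ∧ x * (s * t.prod) ∉ K)).card ≤
        (K.filter (fun x => x * t.prod ∉ K)).card := by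
      apply Finset.card_le_card_of_injOn (fun x => x * s)
      · intro x hx
        simp only [Finset.mem_filter] at hx ⊢
        replace hx := Finset.mem_filter.mp hx
        obtain ⟨hxK, hxs, hxp⟩ := hx
        rw [← mul_assoc] at hxp
        exact Finset.mem_filter.mpr ⟨hxs, hxp⟩
      · intro a _ b _ h
        exact mul_right_cancel h
    calc (K.filter (fun x => x * (s :: t).prod ∉ K)).card
        ≤ _ := Finset.card_le_card hsub
      _ ≤ (K.filter (fun x => x * s ∉ K)).card +
          (K.filter (fun x => x * s ∈ K ∧ x * (s * t.prod) ∉ K)).card :=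
          Finset.card_union_le _ _
      _ ≤ (K.filter (fun x => x * s ∉ K)).card + (K.filter (fun x => x * t.prod ∉ K)).card :=
          Nat.add_le_add_left h2 _
      _ ≤ _ := by
          simp only [List.map_cons, List.sum_cons]
          exact Nat.add_le_add_left ih _

/-- If `|B(o,r)| ≥ 2|K|`, then some generator `g ∈ S` moves at least
`|K|/(2r)` elements of `K` out of `K`. -/
theorem exit_generator_exists
    {Γ : Type*} [Group Γ] (S : Finset Γ)
    (hsymm : ∀ s ∈ S, s⁻¹ ∈ S)
    (hgen : Subgroup.closure (S : Set Γ) = ⊤)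
    (K : Finset Γ) (hK : K.Nonempty)
    (r : ℕ) (hr : 1 ≤ r)
    (hball : 2 * K.card ≤ Nat.card (cayleyBall S r)) :
    ∃ g ∈ S, (K.card : ℝ) / (2 * r) ≤ ((K.filter (fun x => x * g ∉ K)).card : ℝ) := by
  set N : Γ → ℕ := fun g => (K.filter (fun x => x * g ∉ K)).card with hN
  set B := ballFinset S r with hBdef
  have hcoe : (↑B : Set Γ) = cayleyBall S r := coe_ballFinset S r
  have hBcard : Nat.card (cayleyBall S r) = B.card := by
    rw [← hcoe, Nat.card_coe_set_eq, Set.ncard_coe_finset]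
  rw [hBcard] at hball
  have hB1 : (1 : Γ) ∈ B := by
    have h1 : (1:Γ) ∈ (↑B : Set Γ) := by rw [hcoe]; exact ⟨[], by simp⟩
    exact Finset.mem_coe.mp h1
  have hBpos : 0 < B.card := Finset.card_pos.mpr ⟨1, hB1⟩
  have hKpos : 0 < K.card := Finset.card_pos.mpr hK
  have hKB : K.card ≤ B.card := by omega
  set c := B.card - K.card with hcdef
  have hc : K.card + c = B.card := Nat.add_sub_cancel' hKB
  have hKc : K.card ≤ c := by omega
  -- counting: find g ∈ B with K.card ≤ 2 * N g
  have hsum : K.card * c ≤ ∑ g ∈ B, N g := by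
    have hswap : ∑ g ∈ B, N g = ∑ x ∈ K, (B.filter (fun g => x * g ∉ K)).card := by
      simp only [hN, Finset.card_filter]
      rw [Finset.sum_comm]
    rw [hswap]
    have hx : ∀ x ∈ K, c ≤ (B.filter (fun g => x * g ∉ K)).card := by
      intro x _
      have hin : (B.filter (fun g => x * g ∈ K)).card ≤ K.card := by
        apply Finset.card_le_card_of_injOn (fun g => x * g)
        · intro g hg; exact (Finset.mem_filter.mp hg).2
        · intro a _ b _ h; exact mul_left_cancel h
      have hpart := Finset.card_filter_add_card_filter_not (s := B)
        (p := fun g => x * g ∈ K)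
      omega
    calc K.card * c = ∑ _x ∈ K, c := by rw [Finset.sum_const, smul_eq_mul]
      _ ≤ _ := Finset.sum_le_sum hx
  have key : ∃ g ∈ B, K.card ≤ 2 * N g := by
    by_contra h
    push_neg at h
    have hle : ∀ g ∈ B, 2 * N g + 1 ≤ K.card := fun g hg => h g hg
    have hs2 : 2 * (∑ g ∈ B, N g) + B.card ≤ B.card * K.card := by
      calc 2 * (∑ g ∈ B, N g) + B.card = ∑ g ∈ B, (2 * N g + 1) := by
            rw [Finset.sum_add_distrib, Finset.sum_const, smul_eq_mul, mul_one, Finset.mul_sum]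
        _ ≤ ∑ _g ∈ B, K.card := Finset.sum_le_sum hle
        _ = B.card * K.card := by rw [Finset.sum_const, smul_eq_mul]
    have hBK : B.card * K.card ≤ 2 * (K.card * c) := by nlinarith [hc, hKc]
    have hA : 2 * (K.card * c) ≤ 2 * ∑ g ∈ B, N g := Nat.mul_le_mul_left 2 hsum
    linarith [hBK, hA, hs2, hBpos]
  obtain ⟨g, hgB, hgN⟩ := key
  obtain ⟨l, hlS, hlen, hlprod⟩ : ∃ l : List Γ, (∀ s ∈ l, s ∈ S) ∧ l.length ≤ r ∧ l.prod = g := by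
    have hg' : g ∈ (↑B : Set Γ) := Finset.mem_coe.mpr hgB
    rw [hcoe] at hg'
    exact hg'
  have hNg : N g ≤ (l.map N).sum := by
    rw [← hlprod]
    exact telescope K l
  have hlne : l ≠ [] := by
    rintro rfl
    simp only [List.map_nil, List.sum_nil, Nat.le_zero] at hNg
    omega
  obtain ⟨s, hsl, hsmax⟩ : ∃ s ∈ l, ∀ t ∈ l, N t ≤ N s := by
    have hne : l.toFinset.Nonempty := by
      simpa [List.toFinset_eq_empty_iff] using hlne
    obtain ⟨s, hs, hmax⟩ := Finset.exists_max_image l.toFinset N hne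
    exact ⟨s, List.mem_toFinset.mp hs, fun t ht => hmax t (List.mem_toFinset.mpr ht)⟩
  have hsum2 : (l.map N).sum ≤ l.length * N s := by
    have h := List.sum_le_card_nsmul (l.map N) (N s) (by
      intro x hx
      obtain ⟨t, ht, rfl⟩ := List.mem_map.mp hx
      exact hsmax t ht)
    simpa [smul_eq_mul] using h
  have hfinal : K.card ≤ 2 * r * N s := by
    calc K.card ≤ 2 * N g := hgN
      _ ≤ 2 * (l.length * N s) := Nat.mul_le_mul_left 2 (le_trans hNg hsum2)
      _ ≤ 2 * (r * N s) := Nat.mul_le_mul_left 2 (Nat.mul_le_mul_right _ hlen)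
      _ = 2 * r * N s := by ring
  refine ⟨s, hlS s hsl, ?_⟩
  rw [div_le_iff₀ (by positivity)]
  have hcast : (K.card : ℝ) ≤ 2 * r * N s := by exact_mod_cast hfinal
  linarith
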